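/- Let M be an s×s symmetric real matrix such that all off-diagonal entries are nonnegative, there is a vector m with all entries strictly positive satisfying M·m = 0, and the graph on {1,…,s} with an edge {i,j} whenever M_{ij} > 0 (i ≠ j) is connected. Then M is negative semidefinite, and every vector x with xᵀ M x = 0 is a scalar multiple of m. -/

import Mathlib

open Matrix

theorem stmt_5 (s : ℕ) (M : Matrix (Fin s) (Fin s) ℝ) (hsym : M.IsSymm)
    (hoff : ∀ i j : Fin s, i ≠ j → 0 ≤ M i j)
    (m : Fin s → ℝ) (hm : ∀ i, 0 < m i) (hker : M.mulVec m = 0)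
    (hconn : ∀ i j : Fin s,
      Relation.ReflTransGen (fun a b : Fin s => a ≠ b ∧ 0 < M a b) i j) :
    (∀ x : Fin s → ℝ, x ⬝ᵥ M.mulVec x ≤ 0) ∧
      (∀ x : Fin s → ℝ, x ⬝ᵥ M.mulVec x = 0 → ∃ c : ℝ, x = c • m) := by
  have hm0 : ∀ i, m i ≠ 0 := fun i => (hm i).ne'
  have hsym' : ∀ i j, M j i = M i j := fun i j => hsym.apply i j
  have hA : ∀ i, ∑ j, M i j * m j = 0 := by
    intro i
    have := congrFun hker i
    simpa [Matrix.mulVec, dotProduct] using this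
  have hC : ∀ j, ∑ i, M i j * m i = 0 := by
    intro j
    calc ∑ i, M i j * m i = ∑ i, M j i * m i :=
          Finset.sum_congr rfl fun i _ => by rw [hsym' i j]
      _ = 0 := hA j
  have key : ∀ x : Fin s → ℝ,
      ∑ i, ∑ j, M i j * m i * m j * (x i / m i - x j / m j) ^ 2
        = -2 * (x ⬝ᵥ M.mulVec x) := by
    intro x
    set y : Fin s → ℝ := fun i => x i / m i with hydef
    have hx : ∀ i, x i = m i * y i := by
      intro i
      rw [hydef]
      field_simp
      rw [mul_div_assoc, div_self (hm0 i), mul_one]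
    have hQ : x ⬝ᵥ M.mulVec x = ∑ i, ∑ j, M i j * (m i * y i) * (m j * y j) := by
      simp only [dotProduct, Matrix.mulVec, Finset.mul_sum]
      refine Finset.sum_congr rfl fun i _ => Finset.sum_congr rfl fun j _ => ?_
      rw [hx i, hx j]; ring
    have h0 : ∑ i, (m i * y i ^ 2) * (∑ j, M i j * m j) = 0 := by simp [hA]
    have h1 : ∑ j, (m j * y j ^ 2) * (∑ i, M i j * m i) = 0 := by simp [hC]
    have expand :
        ∑ i, ∑ j, M i j * m i * m j * (y i - y j) ^ 2
          = ∑ i, (m i * y i ^ 2) * (∑ j, M i j * m j)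
            + ∑ j, (m j * y j ^ 2) * (∑ i, M i j * m i)
            - 2 * ∑ i, ∑ j, M i j * (m i * y i) * (m j * y j) := by
      have e1 : ∑ i, (m i * y i ^ 2) * (∑ j, M i j * m j)
          = ∑ i, ∑ j, (m i * y i ^ 2) * (M i j * m j) := by
        simp [Finset.mul_sum]
      have e2 : ∑ j, (m j * y j ^ 2) * (∑ i, M i j * m i)
          = ∑ i, ∑ j, (m j * y j ^ 2) * (M i j * m i) := by
        rw [Finset.sum_comm]
        simp [Finset.mul_sum]
      have e3 : 2 * ∑ i, ∑ j, M i j * (m i * y i) * (m j * y j)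
          = ∑ i, ∑ j, 2 * (M i j * (m i * y i) * (m j * y j)) := by
        simp [Finset.mul_sum]
      rw [e1, e2, e3, ← Finset.sum_add_distrib, ← Finset.sum_sub_distrib]
      refine Finset.sum_congr rfl fun i _ => ?_
      rw [← Finset.sum_add_distrib, ← Finset.sum_sub_distrib]
      exact Finset.sum_congr rfl fun j _ => by ring
    rw [expand, h0, h1, hQ]
    ring
  have hterm : ∀ x : Fin s → ℝ, ∀ i j : Fin s,
      0 ≤ M i j * m i * m j * (x i / m i - x j / m j) ^ 2 := by
    intro x i j
    rcases eq_or_ne i j with rfl | h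
    · simp
    · exact mul_nonneg (mul_nonneg (mul_nonneg (hoff i j h) (hm i).le) (hm j).le)
        (sq_nonneg _)
  have hSnn : ∀ x : Fin s → ℝ,
      0 ≤ ∑ i, ∑ j, M i j * m i * m j * (x i / m i - x j / m j) ^ 2 := by
    intro x
    exact Finset.sum_nonneg fun i _ => Finset.sum_nonneg fun j _ => hterm x i j
  constructor
  · intro x
    have := key x
    have := hSnn x
    linarith
  · intro x hx0
    have hS0 : ∑ i, ∑ j, M i j * m i * m j * (x i / m i - x j / m j) ^ 2 = 0 := by
      rw [key x, hx0]; ring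
    have hzero : ∀ i j : Fin s,
        M i j * m i * m j * (x i / m i - x j / m j) ^ 2 = 0 := by
      intro i j
      have h1 := (Finset.sum_eq_zero_iff_of_nonneg
        (fun i _ => Finset.sum_nonneg fun j _ => hterm x i j)).mp hS0 i (Finset.mem_univ i)
      exact (Finset.sum_eq_zero_iff_of_nonneg
        (fun j _ => hterm x i j)).mp h1 j (Finset.mem_univ j)
    have yrel : ∀ a b : Fin s, a ≠ b → 0 < M a b → x a / m a = x b / m b := by
      intro a b hab hMab
      have h := hzero a b
      have hpos : 0 < M a b * m a * m b :=
        mul_pos (mul_pos hMab (hm a)) (hm b)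
      have : (x a / m a - x b / m b) ^ 2 = 0 := by
        rcases mul_eq_zero.mp h with h' | h'
        · exact absurd h' hpos.ne'
        · exact h'
      have := pow_eq_zero_iff (n := 2) (by norm_num) |>.mp this
      linarith
    rcases Nat.eq_zero_or_pos s with rfl | hs
    · exact ⟨0, funext fun i => i.elim0⟩
    · set i0 : Fin s := ⟨0, hs⟩
      refine ⟨x i0 / m i0, funext fun j => ?_⟩
      have hconst : x j / m j = x i0 / m i0 := by
        have h := hconn i0 j
        induction h with
        | refl => rfl
        | tail _ hbc ih => rw [← (yrel _ _ hbc.1 hbc.2)]; exact ih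
      have : x j = (x i0 / m i0) * m j := by
        rw [← hconst]
        field_simp
        rw [mul_div_assoc, div_self (hm0 j), mul_one]
      simpa using this
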